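/- With the setup of the previous statement (U_t = X_t - ∫_0^t γ(S_u) dS_u, S the running supremum of X, S^U the running supremum of U), for every t ≥ 0 one has U_t = S^U_t if and only if X_t = S_t. That is, the set {t ≥ 0 : U_t = S^U_t} coincides with {t ≥ 0 : X_t = S_t}. -/

import Mathlib

open MeasureTheory Set Filter Topology

/-- A càdlàg function on `ℝ` is bounded above on compact intervals `[0, t]`. -/
lemma cadlag_bddAbove_aux (X : ℝ → ℝ)
    (hXright : ∀ t, ContinuousWithinAt X (Set.Ici t) t)
    (hXleft : ∀ t, 0 < t → ∃ l, Tendsto X (nhdsWithin t (Set.Iio t)) (nhds l))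
    (t : ℝ) : BddAbove (X '' Set.Icc 0 t) := by
  refine isCompact_Icc.induction_on (by simp) (fun s t hsub h => h.mono (image_mono hsub))
    (fun s t hs ht => by rw [image_union]; exact hs.union ht) (fun z hz => ?_)
  classical
  set l : ℝ := if h : 0 < z then Classical.choose (hXleft z h) else 0 with hl
  set M : ℝ := max (X z + 1) (l + 1) with hM
  set E : Set ℝ := {u | X u ≤ M} ∪ Iio 0 with hEdef
  have hEr : E ∈ 𝓝[Ici z] z := by
    have h1 : ∀ᶠ u in 𝓝[Ici z] z, X u < X z + 1 :=
      (hXright z).eventually_lt_const (lt_add_one (X z))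
    filter_upwards [h1] with u hu
    exact Or.inl (le_trans hu.le (le_max_left _ _))
  have hEl : E ∈ 𝓝[Iio z] z := by
    by_cases h : 0 < z
    · have hT : Tendsto X (𝓝[Iio z] z) (𝓝 (Classical.choose (hXleft z h))) :=
        Classical.choose_spec (hXleft z h)
      have h1 : ∀ᶠ u in 𝓝[Iio z] z, X u < l + 1 := by
        rw [hl, dif_pos h]
        exact hT.eventually_lt_const (lt_add_one _)
      filter_upwards [h1] with u hu
      exact Or.inl (le_trans hu.le (le_max_right _ _))
    · have hz0 : z = 0 := le_antisymm (not_lt.mp h) hz.1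
      have h1 : ∀ᶠ u in 𝓝[Iio z] z, u ∈ Iio z := eventually_mem_nhdsWithin
      filter_upwards [h1] with u hu
      exact Or.inr (by simpa [hz0] using hu)
  have hE : E ∈ 𝓝[Icc 0 t] z := by
    have hle : 𝓝[Icc (0:ℝ) t] z ≤ 𝓝[Iio z] z ⊔ 𝓝[Ici z] z := by
      rw [← nhdsWithin_union, Iio_union_Ici, nhdsWithin_univ]
      exact nhdsWithin_le_nhds
    exact hle (mem_sup.mpr ⟨hEl, hEr⟩)
  refine ⟨E ∩ Icc 0 t, inter_mem hE self_mem_nhdsWithin, ⟨M, ?_⟩⟩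
  rintro y ⟨u, ⟨hu1, hu2⟩, rfl⟩
  rcases hu1 with h | h
  · exact h
  · exact absurd hu2.1 (not_le.mpr h)

/-- With the setup of Statement 6, for every `t ≥ 0` one has
`U t = S^U_t` if and only if `X t = S t`. -/
theorem taxed_process_at_max_iff
    (X : ℝ → ℝ) (x : ℝ) (hx : 0 ≤ x) (hX0 : X 0 = x)
    (hXright : ∀ t, ContinuousWithinAt X (Set.Ici t) t)
    (hXleft : ∀ t, 0 < t → ∃ l, Tendsto X (nhdsWithin t (Set.Iio t)) (nhds l))
    (S : StieltjesFunction ℝ)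
    (hS : ∀ t, 0 ≤ t → S t = ⨆ s : Set.Icc (0:ℝ) t, X s)
    (γ : ℝ → ℝ) (hmeas : Measurable γ)
    (hγ0 : ∀ y, 0 ≤ y → 0 ≤ γ y) (hγ1 : ∀ y, 0 ≤ y → γ y < 1)
    (U SU : ℝ → ℝ)
    (hU : ∀ t, U t = X t - ∫ u in Set.Ioc (0:ℝ) t, γ (S u) ∂S.measure)
    (hSU : ∀ t, SU t = ⨆ s : Set.Icc (0:ℝ) t, U s) :
    ∀ t, 0 ≤ t → (U t = SU t ↔ X t = S t) := by
  intro t ht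
  haveI hne : Nonempty (Set.Icc (0:ℝ) t) := ⟨⟨0, le_rfl, ht⟩⟩
  haveI hne0 : Nonempty (Set.Icc (0:ℝ) (0:ℝ)) := ⟨⟨0, le_rfl, le_rfl⟩⟩
  have hbdd : ∀ s : ℝ, BddAbove (Set.range fun u : Set.Icc (0:ℝ) s => X u) := by
    intro s
    rw [← Set.image_eq_range]
    exact cadlag_bddAbove_aux X hXright hXleft s
  have hXleS : ∀ s u : ℝ, 0 ≤ u → u ≤ s → X u ≤ S s := by
    intro s u hu hus
    rw [hS s (hu.trans hus)]
    exact le_ciSup (hbdd s) ⟨u, hu, hus⟩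
  have hS0 : S 0 = x := by
    refine le_antisymm ?_ (hX0 ▸ hXleS 0 0 le_rfl le_rfl)
    rw [hS 0 le_rfl]
    refine ciSup_le ?_
    rintro ⟨u, hu1, hu2⟩
    have hu0 : u = 0 := le_antisymm hu2 hu1
    simp [hu0, hX0]
  have hSnonneg : ∀ u : ℝ, 0 ≤ u → 0 ≤ S u := fun u hu =>
    (hx.trans_eq hS0.symm).trans (S.mono hu)
  have hγS_meas : Measurable fun u => γ (S u) := hmeas.comp S.mono.measurable
  -- integrability on intervals with nonnegative left endpoint
  have hint : ∀ a b : ℝ, 0 ≤ a → IntegrableOn (fun u => γ (S u)) (Set.Ioc a b) S.measure := by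
    intro a b ha
    apply Measure.integrableOn_of_bounded (M := 1)
    · rw [StieltjesFunction.measure_Ioc]; exact ENNReal.ofReal_ne_top
    · exact hγS_meas.aestronglyMeasurable
    · refine (ae_restrict_iff' measurableSet_Ioc).mpr (ae_of_all _ fun u hu => ?_)
      have hu0 : (0:ℝ) ≤ u := le_of_lt (lt_of_le_of_lt ha hu.1)
      have hSu : 0 ≤ S u := hSnonneg u hu0
      rw [Real.norm_eq_abs, abs_le]
      exact ⟨by linarith [hγ0 (S u) hSu], (hγ1 (S u) hSu).le⟩
  set I : ℝ → ℝ := fun s => ∫ u in Set.Ioc (0:ℝ) s, γ (S u) ∂S.measure with hI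
  have hIadd : ∀ s : ℝ, 0 ≤ s → s ≤ t →
      I t = I s + ∫ u in Set.Ioc s t, γ (S u) ∂S.measure := by
    intro s hs hst
    rw [hI]
    simp only
    rw [← Set.Ioc_union_Ioc_eq_Ioc hs hst,
      setIntegral_union (Set.Ioc_disjoint_Ioc_of_le le_rfl) measurableSet_Ioc (hint 0 s le_rfl)
        (hint s t hs)]
  have hJnonneg : ∀ s : ℝ, 0 ≤ s → 0 ≤ ∫ u in Set.Ioc s t, γ (S u) ∂S.measure := by
    intro s hs
    refine setIntegral_nonneg measurableSet_Ioc fun u hu => ?_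
    exact hγ0 (S u) (hSnonneg u (le_of_lt (lt_of_le_of_lt hs hu.1)))
  have hJle : ∀ s : ℝ, 0 ≤ s → s ≤ t →
      (∫ u in Set.Ioc s t, γ (S u) ∂S.measure) ≤ S t - S s := by
    intro s hs hst
    have h1 : (∫ u in Set.Ioc s t, γ (S u) ∂S.measure) ≤
        ∫ _ in Set.Ioc s t, (1:ℝ) ∂S.measure := by
      refine setIntegral_mono_on (hint s t hs)
        (integrableOn_const ?_) measurableSet_Ioc (fun u hu => ?_)
      · rw [StieltjesFunction.measure_Ioc]; exact ENNReal.ofReal_ne_top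
      · exact (hγ1 (S u) (hSnonneg u (le_of_lt (lt_of_le_of_lt hs hu.1)))).le
    have h2 : (∫ _ in Set.Ioc s t, (1:ℝ) ∂S.measure) = S t - S s := by
      rw [setIntegral_const, measureReal_def, StieltjesFunction.measure_Ioc,
        ENNReal.toReal_ofReal (sub_nonneg.mpr (S.mono hst)), smul_eq_mul, mul_one]
    linarith
  -- pointwise bound : U s ≤ S t - I t for s ∈ [0, t]
  have hUb : ∀ s : ℝ, 0 ≤ s → s ≤ t → U s ≤ S t - I t := by
    intro s hs hst
    rw [hU s]
    have h1 : X s ≤ S s := hXleS s s hs le_rfl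
    have h2 := hIadd s hs hst
    have h3 := hJle s hs hst
    have e1 : I s = ∫ u in Set.Ioc (0:ℝ) s, γ (S u) ∂S.measure := rfl
    linarith
  -- the key identity `SU t = S t - I t`
  have hkey : SU t = S t - I t := by
    rw [hSU t]
    refine le_antisymm (ciSup_le ?_) ?_
    · rintro ⟨s, hs0, hst⟩
      exact hUb s hs0 hst
    · have hbddU : BddAbove (Set.range fun s : Set.Icc (0:ℝ) t => U s) := by
        refine ⟨S t - I t, ?_⟩
        rintro y ⟨⟨s, hs0, hst⟩, rfl⟩
        exact hUb s hs0 hst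
      have hsup : S t ≤ (⨆ s : Set.Icc (0:ℝ) t, U s) + I t := by
        rw [hS t ht]
        refine ciSup_le ?_
        rintro ⟨s, hs0, hst⟩
        have h1 : U s ≤ ⨆ s : Set.Icc (0:ℝ) t, U s := le_ciSup hbddU ⟨s, hs0, hst⟩
        have h2 : I s ≤ I t := by
          have := hIadd s hs0 hst
          have := hJnonneg s hs0
          linarith
        have h3 : X s = U s + I s := by
          have e1 : I s = ∫ u in Set.Ioc (0:ℝ) s, γ (S u) ∂S.measure := rfl
          rw [hU s]; linarith
        calc X s = U s + I s := h3
          _ ≤ (⨆ s : Set.Icc (0:ℝ) t, U s) + I t := add_le_add h1 h2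
      linarith
  rw [hU t, hkey]
  have e1 : I t = ∫ u in Set.Ioc (0:ℝ) t, γ (S u) ∂S.measure := rfl
  constructor <;> intro h <;> linarith
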